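/- Let X be a finite set, μ a probability distribution on the set ℒ of strict linear orders on X, and define ρ̂(D,x) = μ({≻ : x ≻ y for all y ∈ D∖x}) for x ∈ D ⊆ X. Then for every x ∈ D ⊆ X, K(ρ̂, D, x) = μ({≻ : y ≻ x for all y ∈ X∖D and x ≻ z for all z ∈ D∖x}); in particular K(ρ̂, D, x) ≥ 0. -/
import Mathlib


open Finset

variable {α : Type*} [Fintype α] [DecidableEq α]

/-- A strict linear order (ranking) on the finite set `α`, encoded as an
irreflexive, transitive, weakly complete boolean relation. -/
def Ranking (α : Type*) [Fintype α] [DecidableEq α] : Type _ :=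
  {r : α → α → Bool //
    (∀ x, ¬ r x x) ∧ (∀ x y z, r x y → r y z → r x z) ∧
    (∀ x y, x ≠ y → r x y ∨ r y x)}

instance : Fintype (Ranking α) := Subtype.fintype _

/-- The Block–Marschak polynomial `K(ρ, D, x) = ∑_{E ⊇ D} (-1)^{|E \ D|} ρ(E, x)`. -/
noncomputable def bmK (ρ : Finset α → α → ℝ) (D : Finset α) (x : α) : ℝ :=
  ∑ E : Finset α, if D ⊆ E then (-1 : ℝ) ^ (E \ D).card * ρ E x else 0

lemma key (p : Ranking α) (D : Finset α) (x : α) (hx : x ∈ D) :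
    (∑ E : Finset α, if D ⊆ E then
        (-1:ℝ)^(E\D).card * (if ∀ y ∈ E, y ≠ x → p.1 x y then 1 else 0) else 0)
    = if (∀ y, y ∉ D → p.1 y x) ∧ (∀ z ∈ D, z ≠ x → p.1 x z) then 1 else 0 := by
  classical
  obtain ⟨r, hirr, htr, hcomp⟩ := p
  simp only at *
  rw [← Finset.sum_filter]
  set A : Finset α := (univ \ D).filter (fun y => r x y) with hA
  have hbij : ∑ E ∈ univ.filter (fun E => D ⊆ E),
      (-1:ℝ)^(E\D).card * (if ∀ y ∈ E, y ≠ x → r x y then 1 else 0)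
      = ∑ S ∈ (univ \ D).powerset,
      (-1:ℝ)^S.card * (if ∀ y ∈ (D ∪ S), y ≠ x → r x y then 1 else 0) := by
    apply Finset.sum_nbij' (fun E => E \ D) (fun S => D ∪ S)
    · intro E hE
      rw [Finset.mem_powerset]
      intro a ha
      exact Finset.mem_sdiff.mpr ⟨mem_univ a, (Finset.mem_sdiff.mp ha).2⟩
    · intro S hS
      simp
    · intro E hE
      simp only [mem_filter, mem_univ, true_and] at hE
      exact Finset.union_sdiff_of_subset hE
    · intro S hS
      simp only [Finset.mem_powerset] at hS
      rw [Finset.union_sdiff_left]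
      exact Finset.sdiff_eq_self_of_disjoint (Finset.disjoint_left.mpr
        (fun a ha => (Finset.mem_sdiff.mp (hS ha)).2)) |>.symm ▸ rfl
    · intro E hE
      simp only [mem_filter, mem_univ, true_and] at hE
      rw [Finset.union_sdiff_of_subset hE]
  rw [hbij]
  by_cases hD : ∀ z ∈ D, z ≠ x → r x z
  · have hne : ∀ y, y ∉ D → y ≠ x := fun y hy h => hy (h ▸ hx)
    have hind : ∀ S ∈ (univ \ D).powerset,
        (-1:ℝ)^S.card * (if ∀ y ∈ (D ∪ S), y ≠ x → r x y then 1 else 0)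
        = if S ⊆ A then (-1:ℝ)^S.card else 0 := by
      intro S hS
      simp only [Finset.mem_powerset] at hS
      by_cases h : S ⊆ A
      · rw [if_pos h, if_pos, mul_one]
        intro y hy hyx
        rcases Finset.mem_union.mp hy with hyD | hyS
        · exact hD y hyD hyx
        · exact (Finset.mem_filter.mp (h hyS)).2
      · rw [if_neg h, if_neg, mul_zero]
        intro hall
        apply h
        intro y hyS
        have hyD : y ∉ D := (Finset.mem_sdiff.mp (hS hyS)).2
        exact Finset.mem_filter.mpr ⟨Finset.mem_sdiff.mpr ⟨mem_univ y, hyD⟩,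
          hall y (Finset.mem_union_right _ hyS) (hne y hyD)⟩
    rw [Finset.sum_congr rfl hind, ← Finset.sum_filter]
    have hpow : (univ \ D).powerset.filter (fun S => S ⊆ A) = A.powerset := by
      ext S
      simp only [Finset.mem_filter, Finset.mem_powerset]
      constructor
      · exact fun h => h.2
      · intro h
        refine ⟨h.trans ?_, h⟩
        exact Finset.filter_subset _ _
    rw [hpow]
    have hz : ((∑ t ∈ A.powerset, (-1:ℤ)^t.card : ℤ) : ℝ) = ∑ t ∈ A.powerset, (-1:ℝ)^t.card := by
      push_cast; rfl
    rw [← hz, Finset.sum_powerset_neg_one_pow_card]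
    by_cases hA0 : A = ∅
    · rw [if_pos hA0, if_pos] <;> [norm_num; skip]
      refine ⟨fun y hy => ?_, hD⟩
      have hyx := hne y hy
      have : ¬ r x y := by
        intro hr
        have : y ∈ A := Finset.mem_filter.mpr ⟨Finset.mem_sdiff.mpr ⟨mem_univ y, hy⟩, hr⟩
        simp [hA0] at this
      rcases hcomp x y (Ne.symm hyx) with h | h
      · exact absurd h this
      · exact h
    · rw [if_neg hA0, if_neg] <;> [norm_num; skip]
      rintro ⟨h1, -⟩
      apply hA0
      rw [Finset.eq_empty_iff_forall_notMem]
      intro y hy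
      obtain ⟨hy1, hy2⟩ := Finset.mem_filter.mp hy
      have hyD : y ∉ D := (Finset.mem_sdiff.mp hy1).2
      have hyx := h1 y hyD
      exact hirr x (htr x y x hy2 hyx)
  · rw [if_neg (by tauto)]
    apply Finset.sum_eq_zero
    intro S hS
    rw [if_neg, mul_zero]
    intro hall
    exact hD fun z hz hzx => hall z (Finset.mem_union_left _ hz) hzx

/-- For a random utility model `μ`, the Block–Marschak polynomial of the induced
stochastic choice `ρ̂(D,x) = μ(x ≻ y ∀ y ∈ D∖x)` equals the probability mass of
rankings placing `x` below all of `X∖D` and above all of `D∖x`; in particular it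
is nonnegative. -/
theorem stmt_13 (μ : Ranking α → ℝ) (hμ0 : ∀ p, 0 ≤ μ p)
    (hμ1 : ∑ p : Ranking α, μ p = 1)
    (ρ : Finset α → α → ℝ)
    (hρ : ρ = fun D x => ∑ p : Ranking α,
      if ∀ y ∈ D, y ≠ x → p.1 x y then μ p else 0)
    (D : Finset α) (x : α) (hx : x ∈ D) :
    bmK ρ D x = (∑ p : Ranking α,
      if (∀ y, y ∉ D → p.1 y x) ∧ (∀ z ∈ D, z ≠ x → p.1 x z) then μ p else 0) ∧
    0 ≤ bmK ρ D x := by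
  have hK : bmK ρ D x = ∑ p : Ranking α,
      if (∀ y, y ∉ D → p.1 y x) ∧ (∀ z ∈ D, z ≠ x → p.1 x z) then μ p else 0 := by
    unfold bmK
    subst hρ
    simp only
    calc (∑ E : Finset α, if D ⊆ E then (-1:ℝ)^(E\D).card *
          (∑ p : Ranking α, if ∀ y ∈ E, y ≠ x → p.1 x y then μ p else 0) else 0)
        = ∑ E : Finset α, ∑ p : Ranking α, μ p *
          (if D ⊆ E then (-1:ℝ)^(E\D).card * (if ∀ y ∈ E, y ≠ x → p.1 x y then 1 else 0) else 0) := by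
          apply Finset.sum_congr rfl; intro E _
          split_ifs with h
          · rw [Finset.mul_sum]
            apply Finset.sum_congr rfl; intro p _
            split_ifs <;> ring
          · simp
      _ = ∑ p : Ranking α, μ p *
          ∑ E : Finset α, (if D ⊆ E then (-1:ℝ)^(E\D).card *
            (if ∀ y ∈ E, y ≠ x → p.1 x y then 1 else 0) else 0) := by
          rw [Finset.sum_comm]
          simp [Finset.mul_sum]
      _ = ∑ p : Ranking α,
          (if (∀ y, y ∉ D → p.1 y x) ∧ (∀ z ∈ D, z ≠ x → p.1 x z) then μ p else 0) := by
          apply Finset.sum_congr rfl; intro p _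
          rw [key p D x hx]
          split_ifs <;> ring
  refine ⟨hK, ?_⟩
  rw [hK]
  apply Finset.sum_nonneg
  intro p _
  split_ifs with h
  exacts [hμ0 p, le_refl 0]
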